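/- The products ρ_n = a_n b_n satisfy the four-term recurrence n^2(n-1)(2n-3)ρ_n = (n-1)(2n-1)(3n^2-5n+1)ρ_{n-1} - (n-2)(2n-3)(3n^2-5n+1)ρ_{n-2} + (n-2)(n-3)^2(2n-1)ρ_{n-3} for all n ≥ 3. -/

import Mathlib

open Set Filter MeasureTheory FormalMultilinearSeries intervalIntegral

/-- The exponential integral `E₁(x) = ∫_x^∞ e^{-t}/t dt`. -/
noncomputable def E1 (x : ℝ) : ℝ := ∫ t in Set.Ioi x, Real.exp (-t) / t


lemma E1_integrableOn {c : ℝ} (hc : 0 < c) :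
    IntegrableOn (fun t => Real.exp (-t) / t) (Ioi c) := by
  apply Integrable.mono' ((exp_neg_integrableOn_Ioi c one_pos).const_mul c⁻¹)
  · exact (ContinuousOn.aestronglyMeasurable
      (by fun_prop (disch := intro t ht; exact ne_of_gt (hc.trans ht))) measurableSet_Ioi)
  · filter_upwards [MeasureTheory.ae_restrict_mem measurableSet_Ioi] with t ht
    have h1 : 0 < t := hc.trans ht
    rw [Real.norm_eq_abs, abs_of_pos (by positivity)]
    calc Real.exp (-t) / t ≤ Real.exp (-t) / c := by gcongr; exact le_of_lt ht
    _ = c⁻¹ * Real.exp (-1 * t) := by rw [neg_one_mul, div_eq_inv_mul]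

lemma E1_hasDerivAt {x : ℝ} (hx : 0 < x) : HasDerivAt E1 (-(Real.exp (-x) / x)) x := by
  set c := x / 2 with hcdef
  have hc : 0 < c := by positivity
  have hcx : c < x := by simp [hcdef]; linarith
  have hint : IntegrableOn (fun t => Real.exp (-t) / t) (Ioi c) := E1_integrableOn hc
  have key : ∀ t ∈ Ioi c, E1 t =
      (∫ u in Ioi c, Real.exp (-u) / u) - ∫ u in c..t, Real.exp (-u) / u := by
    intro t ht
    rw [intervalIntegral.integral_of_le (le_of_lt ht)]
    have hsplit : (∫ u in Ioi c, Real.exp (-u) / u)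
        = (∫ u in Ioc c t, Real.exp (-u) / u) + ∫ u in Ioi t, Real.exp (-u) / u := by
      rw [← MeasureTheory.setIntegral_union (Set.Ioc_disjoint_Ioi le_rfl) measurableSet_Ioi
        (hint.mono_set Ioc_subset_Ioi_self) (hint.mono_set (Ioi_subset_Ioi (le_of_lt ht)))]
      rw [Ioc_union_Ioi_eq_Ioi (le_of_lt ht)]
    rw [E1, hsplit]; ring
  have hd2 : HasDerivAt (fun t => (∫ u in Ioi c, Real.exp (-u) / u)
      - ∫ u in c..t, Real.exp (-u) / u) (-(Real.exp (-x) / x)) x := by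
    have hco : ContinuousOn (fun u : ℝ => Real.exp (-u) / u) (Ioi (0:ℝ)) := by
      fun_prop (disch := intro t ht; exact ne_of_gt ht)
    have hii : IntervalIntegrable (fun u : ℝ => Real.exp (-u) / u) volume c x := by
      apply ContinuousOn.intervalIntegrable
      apply hco.mono
      rw [uIcc_of_le (le_of_lt hcx)]
      exact fun u hu => lt_of_lt_of_le hc hu.1
    have := (intervalIntegral.integral_hasDerivAt_right (a := c)
      (f := fun u => Real.exp (-u) / u) hii
      ((hco.mono (fun u (hu : u ∈ Ioi c) => hc.trans hu)).stronglyMeasurableAtFilter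
        isOpen_Ioi x hcx)
      (ContinuousAt.div (Real.continuous_exp.continuousAt.comp (continuous_neg.continuousAt))
        continuousAt_id (ne_of_gt hx)))
    exact (by simpa using (hasDerivAt_const x (∫ u in Ioi c, Real.exp (-u) / u)).sub this :
      HasDerivAt ((fun _ => ∫ u in Ioi c, Real.exp (-u) / u) - fun t => ∫ u in c..t, Real.exp (-u) / u)
        (-(Real.exp (-x) / x)) x)
  exact hd2.congr_of_eventuallyEq (by filter_upwards [isOpen_Ioi.mem_nhds hcx] with t ht using key t ht)

lemma hasFPSOB_of (c : ℕ → ℝ) (F : ℝ → ℝ)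
    (h : ∀ x : ℝ, |x| < 1 → HasSum (fun n => c n * x ^ n) (F x)) :
    HasFPowerSeriesOnBall F (ofScalars ℝ c) 0 1 := by
  constructor
  · apply ENNReal.le_of_forall_nnreal_lt
    intro r hr
    apply le_radius_of_isBigO
    have hr1 : |(r:ℝ)| < 1 := by
      rw [abs_of_nonneg r.coe_nonneg]
      exact_mod_cast hr
    have h1 : (fun n => c n * (r:ℝ)^n) =O[atTop] (fun _ => (1:ℝ)) :=
      (h r hr1).summable.tendsto_atTop_zero.isBigO_one ℝ
    refine Asymptotics.IsBigO.trans ?_ h1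
    apply Asymptotics.isBigO_of_le
    intro n
    have h2 : (0:ℝ) ≤ ‖ofScalars ℝ c n‖ * (r:ℝ)^n := by positivity
    rw [Real.norm_eq_abs, abs_of_nonneg h2, Real.norm_eq_abs, abs_mul, abs_pow,
      abs_of_nonneg r.coe_nonneg]
    rw [ofScalars_norm, Real.norm_eq_abs]
  · exact one_pos
  · intro y hy
    simp only [Metric.mem_eball, edist_eq_enorm_sub, enorm_eq_nnnorm, sub_zero] at hy
    have hy1 : |y| < 1 := by
      rw [← Real.norm_eq_abs]
      exact_mod_cast hy
    simp only [ofScalars_apply_eq, smul_eq_mul, zero_add]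
    exact h y hy1

lemma seq_eq_of_hasSum (c c' : ℕ → ℝ) (F : ℝ → ℝ)
    (h : ∀ x : ℝ, |x| < 1 → HasSum (fun n => c n * x ^ n) (F x))
    (h' : ∀ x : ℝ, |x| < 1 → HasSum (fun n => c' n * x ^ n) (F x)) : c = c' := by
  have e := ((hasFPSOB_of c F h).hasFPowerSeriesAt).eq_formalMultilinearSeries
    ((hasFPSOB_of c' F h').hasFPowerSeriesAt)
  exact (ofScalars_series_eq_iff ℝ c c').mp e

lemma seq_eq_zero_of_hasSum (c : ℕ → ℝ)
    (h : ∀ x : ℝ, |x| < 1 → HasSum (fun n => c n * x ^ n) 0) : ∀ n, c n = 0 := by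
  have := seq_eq_of_hasSum c (fun _ => 0) (fun _ => 0) h
    (fun x hx => by simpa using hasSum_zero)
  exact fun n => congrFun this n

lemma mem_ball_of_abs {x : ℝ} (hx : |x| < 1) : x ∈ Metric.eball (0:ℝ) 1 := by
  simp only [Metric.mem_eball, edist_eq_enorm_sub, enorm_eq_nnnorm, sub_zero]
  have : ‖x‖₊ < 1 := by rw [← NNReal.coe_lt_one, coe_nnnorm, Real.norm_eq_abs]; exact hx
  exact_mod_cast this

lemma hasSum_single_pow (c : ℕ → ℝ) : HasSum (fun n => c n * (0:ℝ) ^ n) (c 0) := by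
  have : (fun n => c n * (0:ℝ)^n) = (fun n => if n = 0 then c 0 else 0) := by
    funext n; cases n <;> simp
  rw [this]; exact hasSum_ite_eq 0 (c 0)

lemma value_at_zero (c : ℕ → ℝ) (F : ℝ → ℝ)
    (h : ∀ x : ℝ, |x| < 1 → HasSum (fun n => c n * x ^ n) (F x)) : F 0 = c 0 :=
  ((h 0 (by norm_num)).unique (hasSum_single_pow c))

lemma deriv_at_zero (c : ℕ → ℝ) (F : ℝ → ℝ)
    (h : ∀ x : ℝ, |x| < 1 → HasSum (fun n => c n * x ^ n) (F x)) : deriv F 0 = c 1 := by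
  rw [(hasFPSOB_of c F h).hasFPowerSeriesAt.deriv]
  show (ofScalars ℝ c 1) (fun _ => (1:ℝ)) = c 1
  rw [ofScalars_apply_eq]
  simp

lemma deriv_hasSum (c : ℕ → ℝ) (F : ℝ → ℝ)
    (h : ∀ x : ℝ, |x| < 1 → HasSum (fun n => c n * x ^ n) (F x))
    {x : ℝ} (hx : |x| < 1) (hx0 : x ≠ 0) :
    HasSum (fun n : ℕ => ((n:ℝ)+1) * c (n+1) * x ^ n) (deriv F x) := by
  have hp := hasFPSOB_of c F h
  have hd := hp.fderiv
  have hs := hd.hasSum (mem_ball_of_abs hx)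
  have hs2 := (ContinuousLinearMap.apply ℝ ℝ x).hasSum hs
  have hs2' : HasSum (fun n : ℕ => ((n:ℝ)+1) * c (n+1) * x ^ (n+1)) (deriv F x * x) := by
    convert hs2 using 1
    · rfl
    · funext n
      rw [ContinuousLinearMap.apply_apply, FormalMultilinearSeries.derivSeries_apply_diag,
        ofScalars_apply_eq]
      push_cast
      simp only [smul_eq_mul]
      ring
    · rw [ContinuousLinearMap.apply_apply, zero_add]
      have h1 : fderiv ℝ F x x = x • fderiv ℝ F x 1 := by
        rw [← ContinuousLinearMap.map_smul]; norm_num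
      rw [h1, deriv, smul_eq_mul]; ring
  have hs3 := hs2'.div_const x
  have e1 : (fun n : ℕ => ((n:ℝ)+1) * c (n+1) * x ^ n)
      = fun n : ℕ => (((n:ℝ)+1) * c (n+1) * x ^ (n+1)) / x := by
    funext n; rw [pow_succ]; field_simp
  have e2 : deriv F x * x / x = deriv F x := by field_simp
  rw [e1, ← e2]; exact hs3

lemma one_sub_pos' {x : ℝ} (hx : |x| < 1) : 0 < 1 - x := by
  have := abs_lt.mp hx; linarith

lemma F_hasDerivAt {x : ℝ} (hx : |x| < 1) :
    HasDerivAt (fun x : ℝ => Real.exp (x / (1 - x)))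
      (Real.exp (x / (1 - x)) / (1 - x) ^ 2) x := by
  have h1 : (0:ℝ) < 1 - x := one_sub_pos' hx
  have hin : HasDerivAt (fun x : ℝ => x / (1 - x)) (1 / (1 - x) ^ 2) x := by
    have := (hasDerivAt_id x).div ((hasDerivAt_const x 1).sub (hasDerivAt_id x)) (ne_of_gt h1)
    convert this using 1
    · rfl
    · rfl
    · rfl
    · simp
  have := hin.exp
  convert this using 1
  ring

lemma y_hasDerivAt {x : ℝ} (hx : |x| < 1) :
    HasDerivAt (fun x : ℝ => 1 / (1 - x)) (1 / (1 - x) ^ 2) x := by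
  have h1 : (0:ℝ) < 1 - x := one_sub_pos' hx
  have := ((hasDerivAt_const x 1).sub (hasDerivAt_id x)).inv (ne_of_gt h1)
  convert this using 1
  · rfl
  · rfl
  · funext y; rw [one_div]; rfl
  · simp

lemma G_hasDerivAt {x : ℝ} (hx : |x| < 1) :
    HasDerivAt (fun x : ℝ => Real.exp (1 / (1 - x)) * E1 (1 / (1 - x)))
      ((Real.exp (1 / (1 - x)) * E1 (1 / (1 - x))) / (1 - x) ^ 2 - 1 / (1 - x)) x := by
  have h1 : (0:ℝ) < 1 - x := one_sub_pos' hx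
  have hy : (0:ℝ) < 1 / (1 - x) := by positivity
  set y := 1 / (1 - x) with hydef
  have hH : HasDerivAt (fun y : ℝ => Real.exp y * E1 y)
      (Real.exp y * E1 y - 1 / y) y := by
    have := (Real.hasDerivAt_exp y).mul (E1_hasDerivAt hy)
    convert this using 1
    · rfl
    · rfl
    · rfl
    rw [Real.exp_neg]
    field_simp
    ring
  have := hH.comp x (y_hasDerivAt hx)
  convert this using 1
  · rfl
  · rfl
  · rfl
  rw [hydef]
  have h2 : (1:ℝ) / (1 / (1 - x)) = 1 - x := by field_simp
  rw [h2]
  field_simp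

/-- defect sequence -/
noncomputable def defect (c : ℕ → ℝ) (r0 r1 : ℝ) (n : ℕ) : ℝ :=
  ((n:ℝ)+1) * c (n+1) - (2*(n:ℝ)+1) * c n + (if n = 0 then 0 else ((n:ℝ)-1) * c (n-1))
    - (if n = 0 then r0 else if n = 1 then r1 else 0)

lemma rec_of_ode (c : ℕ → ℝ) (F : ℝ → ℝ) (r0 r1 : ℝ)
    (hF : ∀ x : ℝ, |x| < 1 → HasSum (fun n => c n * x ^ n) (F x))
    (hODE : ∀ x : ℝ, |x| < 1 → (1-x)^2 * deriv F x = F x + r0 + r1 * x) :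
    ∀ n, defect c r0 r1 n = 0 := by
  apply seq_eq_zero_of_hasSum
  intro x hx
  rcases eq_or_ne x 0 with rfl | hx0
  · have h0 : defect c r0 r1 0 = 0 := by
      have hv := value_at_zero c F hF
      have hd := deriv_at_zero c F hF
      have := hODE 0 (by norm_num)
      simp only [defect, if_pos rfl]
      rw [← hv, ← hd] at *
      simp at this ⊢
      linarith
    have := hasSum_single_pow (defect c r0 r1)
    rwa [h0] at this
  · -- x ≠ 0
    have P1 := deriv_hasSum c F hF hx hx0
    have P4 := hF x hx
    -- shift by one
    set v : ℕ → ℝ := fun n => if n = 0 then 0 else 2*(n:ℝ)* c n * x^n with hv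
    have hv1 : (fun n : ℕ => v (n+1)) = fun n : ℕ => (2*x) * (((n:ℝ)+1) * c (n+1) * x ^ n) := by
      funext n; simp only [hv, Nat.succ_ne_zero, if_false]
      push_cast; rw [pow_succ]; ring
    have P2 : HasSum v (2*x*deriv F x) := by
      have := (P1.mul_left (2*x))
      rw [← hv1] at this
      have h2 := (hasSum_nat_add_iff (f := v) 1).mp this
      simpa [hv] using h2
    -- shift by two
    set w : ℕ → ℝ := fun n => if n < 2 then 0 else ((n:ℝ)-1) * c (n-1) * x^n with hw
    have hw1 : (fun n : ℕ => w (n+2)) = fun n : ℕ => (x^2) * (((n:ℝ)+1) * c (n+1) * x ^ n) := by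
      funext n
      have : ¬ (n+2 < 2) := by omega
      simp only [hw, this, if_false]
      have : n + 2 - 1 = n + 1 := by omega
      rw [this]; push_cast; ring
    have P3 : HasSum w (x^2*deriv F x) := by
      have := (P1.mul_left (x^2))
      rw [← hw1] at this
      have h2 := (hasSum_nat_add_iff (f := w) 2).mp this
      simpa [hw, Finset.sum_range_succ] using h2
    -- inhomogeneous part
    have Pr : HasSum (fun n : ℕ => (if n = 0 then r0 else if n = 1 then r1 else 0) * x^n)
        (r0 + r1 * x) := by
      have h1 := hasSum_ite_eq (0:ℕ) r0
      have h2 := hasSum_ite_eq (1:ℕ) (r1 * x)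
      have h3 := h1.add h2
      have he : (fun n : ℕ => (if n = 0 then r0 else if n = 1 then r1 else 0) * x^n)
          = fun n : ℕ => (if n = 0 then r0 else 0) + if n = 1 then r1 * x else 0 := by
        funext n
        match n with
        | 0 => simp
        | 1 => simp
        | (m+2) => simp
      rw [he]; exact h3
    have hcomb := (((P1.sub P2).add P3).sub P4).sub Pr
    have hval : deriv F x - 2*x*deriv F x + x^2*deriv F x - F x - (r0 + r1 * x) = 0 := by
      have := hODE x hx; nlinarith [this]
    rw [hval] at hcomb
    have he : (fun n : ℕ => defect c r0 r1 n * x ^ n)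
        = fun n : ℕ => ((n:ℝ)+1) * c (n+1) * x ^ n - v n + w n - c n * x ^ n
          - (if n = 0 then r0 else if n = 1 then r1 else 0) * x^n := by
      funext n
      match n with
      | 0 => simp [defect, hv, hw]; try ring
      | 1 => simp [defect, hv, hw]; try (push_cast; ring)
      | (m+2) =>
        have h2 : ¬ (m + 2 < 2) := by omega
        have h0 : (m + 2 : ℕ) ≠ 0 := by omega
        have h1' : (m + 2 : ℕ) ≠ 1 := by omega
        simp only [defect, hv, hw, if_neg h0, if_neg h1', if_neg h2]
        have : (m + 2 : ℕ) - 1 = m + 1 := by omega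
        rw [this]; push_cast; ring
    rw [he]; exact hcomb

/-- The products `ρₙ = aₙ bₙ` satisfy the four-term recurrence
`n²(n-1)(2n-3)ρₙ = (n-1)(2n-1)(3n²-5n+1)ρₙ₋₁ - (n-2)(2n-3)(3n²-5n+1)ρₙ₋₂
 + (n-2)(n-3)²(2n-1)ρₙ₋₃` for all `n ≥ 3`. -/
theorem stmt_15 (a b : ℕ → ℝ)
    (ha : ∀ x : ℝ, |x| < 1 → HasSum (fun n => a n * x ^ n) (Real.exp (x / (1 - x))))
    (hb : ∀ x : ℝ, |x| < 1 → HasSum (fun n => b n * x ^ n)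
      (Real.exp (1 / (1 - x)) * E1 (1 / (1 - x)))) :
    ∀ n : ℕ, 3 ≤ n →
      (n : ℝ) ^ 2 * ((n : ℝ) - 1) * (2 * n - 3) * (a n * b n) =
        ((n : ℝ) - 1) * (2 * n - 1) * (3 * (n : ℝ) ^ 2 - 5 * n + 1) * (a (n - 1) * b (n - 1)) -
        ((n : ℝ) - 2) * (2 * n - 3) * (3 * (n : ℝ) ^ 2 - 5 * n + 1) * (a (n - 2) * b (n - 2)) +
        ((n : ℝ) - 2) * ((n : ℝ) - 3) ^ 2 * (2 * n - 1) * (a (n - 3) * b (n - 3)) := by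
  have hA : ∀ m, defect a 0 0 m = 0 := by
    apply rec_of_ode a _ 0 0 ha
    intro x hx
    have h1 := one_sub_pos' hx
    rw [(F_hasDerivAt hx).deriv]
    field_simp
    simp
  have hB : ∀ m, defect b (-1) 1 m = 0 := by
    apply rec_of_ode b _ (-1) 1 hb
    intro x hx
    have h1 := one_sub_pos' hx
    rw [(G_hasDerivAt hx).deriv]
    field_simp
    ring
  intro N hN
  set n : ℝ := (N : ℝ) with hn
  have cast1 : ((N-1 : ℕ) : ℝ) = n - 1 := by
    rw [Nat.cast_sub (by omega)]; norm_num; rfl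
  have cast2 : ((N-2 : ℕ) : ℝ) = n - 2 := by
    rw [Nat.cast_sub (by omega)]; norm_num; rfl
  -- h1
  have e1 := hA (N-1)
  simp only [defect] at e1
  rw [show N-1+1 = N from by omega, show N-1-1 = N-2 from by omega,
    if_neg (show ¬(N-1 = 0) by omega), if_neg (show ¬(N-1 = 0) by omega),
    if_neg (show ¬(N-1 = 1) by omega), cast1] at e1
  have h1 : ((n-1)+1) * a N = (2*(n-1)+1) * a (N-1) - ((n-1)-1) * a (N-2) := by linarith
  -- h2
  have e2 := hA (N-2)
  simp only [defect] at e2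
  rw [show N-2+1 = N-1 from by omega, show N-2-1 = N-3 from by omega,
    if_neg (show ¬(N-2 = 0) by omega), if_neg (show ¬(N-2 = 0) by omega), cast2] at e2
  have h2 : ((n-2)+1) * a (N-1) = (2*(n-2)+1) * a (N-2) - ((n-2)-1) * a (N-3) := by
    rcases eq_or_ne (N-2 : ℕ) 1 with hc | hc
    · rw [if_pos hc] at e2; linarith
    · rw [if_neg hc] at e2; linarith
  -- h3
  have e3 := hB (N-1)
  simp only [defect] at e3
  rw [show N-1+1 = N from by omega, show N-1-1 = N-2 from by omega,
    if_neg (show ¬(N-1 = 0) by omega), if_neg (show ¬(N-1 = 0) by omega),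
    if_neg (show ¬(N-1 = 1) by omega), cast1] at e3
  have h3 : ((n-1)+1) * b N = (2*(n-1)+1) * b (N-1) - ((n-1)-1) * b (N-2) := by linarith
  -- h4 with inhomogeneity
  set ε : ℝ := if (N-2 : ℕ) = 1 then 1 else 0 with hε_def
  have e4 := hB (N-2)
  simp only [defect] at e4
  rw [show N-2+1 = N-1 from by omega, show N-2-1 = N-3 from by omega,
    if_neg (show ¬(N-2 = 0) by omega), if_neg (show ¬(N-2 = 0) by omega), cast2] at e4
  have h4 : ((n-2)+1) * b (N-1) = (2*(n-2)+1) * b (N-2) - ((n-2)-1) * b (N-3) + ε := by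
    rcases eq_or_ne (N-2 : ℕ) 1 with hc | hc
    · rw [if_pos hc] at e4; rw [hε_def, if_pos hc]; linarith
    · rw [if_neg hc] at e4; rw [hε_def, if_neg hc]; linarith
  have hε : ε * (n - 3) = 0 := by
    rcases eq_or_ne (N-2 : ℕ) 1 with hc | hc
    · have h3' : N = 3 := by omega
      have hn3 : n = 3 := by rw [hn, h3']; norm_num
      rw [hε_def, if_pos hc, hn3]; ring
    · rw [hε_def, if_neg hc]; ring
  have p13 : (((n-1)+1) * a N) * (((n-1)+1) * b N)
      = ((2*(n-1)+1) * a (N-1) - ((n-1)-1) * a (N-2))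
        * ((2*(n-1)+1) * b (N-1) - ((n-1)-1) * b (N-2)) := by rw [h1, h3]
  have p24 : (((n-2)+1) * a (N-1)) * (((n-2)+1) * b (N-1))
      = ((2*(n-2)+1) * a (N-2) - ((n-2)-1) * a (N-3))
        * ((2*(n-2)+1) * b (N-2) - ((n-2)-1) * b (N-3) + ε) := by rw [h2, h4]
  linear_combination ((n-1)*(2*n-3)) * p13
    - ((2*n-1)*(n-2)*(2*n-3)) * (b (N-2) * h2 + a (N-2) * h4)
    + ((2*n-1)*(n-2)) * p24
    - ((2*n-1)*(n-2)*(a (N-3))) * hε
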